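/- Under the rescaling u = x/(c(t−t₀))^{1/2}, v = y/(c(t−t₀))^{3/2}, the CDF of the two-dimensional diffusive shear solution converges, as t → ∞, pointwise to the steady self-similar shape F_{UV}(u',v') = (√3 c²/(π D²)) ∫_{−∞}^{u'} ∫_{−∞}^{v'} exp(−(6(v − u/(2c))² c³/D² + u² c/(2D²))) dv du, which equals the rescaled CDF of the purely x-diffusive self-similar solution. -/

import Mathlib

open Real MeasureTheory Filter Set

/-- Density of the doubly-diffusive shear solution. -/
noncomputable def shearDensity2 (D t₀ x y t : ℝ) : ℝ :=
  1 / (2 * Real.pi * D ^ 2 * (t - t₀) * Real.sqrt (1 + (t - t₀) ^ 2 / 12)) *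
    Real.exp (-((y - x * (t - t₀) / 2) ^ 2 /
        (2 * D ^ 2 * (t - t₀) * (1 + (t - t₀) ^ 2 / 12))
      + x ^ 2 / (2 * D ^ 2 * (t - t₀))))

/-- Density of the purely x-diffusive self-similar solution. -/
noncomputable def shearDensity1 (D t₀ x y t : ℝ) : ℝ :=
  Real.sqrt 3 / (Real.pi * D ^ 2 * (t - t₀) ^ 2) *
    Real.exp (-(6 * (y - x * (t - t₀) / 2) ^ 2 / (D ^ 2 * (t - t₀) ^ 3)
      + x ^ 2 / (2 * D ^ 2 * (t - t₀))))

/-- CDF of the doubly-diffusive solution. -/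
noncomputable def cdf2 (D t₀ x y t : ℝ) : ℝ :=
  ∫ x' in Iic x, ∫ y' in Iic y, shearDensity2 D t₀ x' y' t

/-- CDF of the purely x-diffusive self-similar solution. -/
noncomputable def cdf1 (D t₀ x y t : ℝ) : ℝ :=
  ∫ x' in Iic x, ∫ y' in Iic y, shearDensity1 D t₀ x' y' t

/-- The steady self-similar shape in the rescaled variables. -/
noncomputable def steadyShape (D c u' v' : ℝ) : ℝ :=
  Real.sqrt 3 * c ^ 2 / (Real.pi * D ^ 2) *
    ∫ u in Iic u', ∫ v in Iic v',
      Real.exp (-(6 * (v - u / (2 * c)) ^ 2 * c ^ 3 / D ^ 2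
        + u ^ 2 * c / (2 * D ^ 2)))

open Topology

/- Auxiliary lemmas -/

lemma integral_Iic_comp_mul_left' (g : ℝ → ℝ) {a : ℝ} (ha : 0 < a) (s : ℝ) :
    ∫ x in Iic (a * s), g x = a * ∫ u in Iic s, g (a * u) := by
  have h1 : ∀ u : ℝ, (Iic s).indicator (fun u => g (a * u)) u
      = (Iic (a * s)).indicator g (a * u) := by
    intro u
    by_cases h : u ≤ s
    · simp [indicator_of_mem, h, (mul_le_mul_iff_right₀ ha).2 h]
    · rw [indicator_of_notMem (by simpa using h),
        indicator_of_notMem (by simp [not_le.1 h, (mul_lt_mul_iff_right₀ ha).2 (not_le.1 h)])]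
  rw [← integral_indicator measurableSet_Iic, ← integral_indicator measurableSet_Iic]
  calc ∫ x, (Iic (a*s)).indicator g x
      = a * (|a⁻¹| • ∫ x, (Iic (a*s)).indicator g x) := by
        rw [abs_of_pos (by positivity), smul_eq_mul, ← mul_assoc,
          mul_inv_cancel₀ ha.ne', one_mul]
    _ = a * ∫ u, (Iic s).indicator (fun u => g (a*u)) u := by
        rw [← MeasureTheory.Measure.integral_comp_mul_left ((Iic (a*s)).indicator g) a]
        simp_rw [h1]

lemma integrableG {c D k : ℝ} (hc : 0 < c) (hD : 0 < D) (hk : 0 < k) :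
    Integrable (fun p : ℝ × ℝ =>
      Real.exp (-(k * (p.2 - p.1 / (2*c)) ^ 2 + c / (2*D^2) * p.1 ^ 2))) := by
  set σ : ℝ := c / (2*D^2) with hσdef
  have hσ : 0 < σ := by positivity
  have hcont : Continuous (fun p : ℝ × ℝ =>
      Real.exp (-(k * (p.2 - p.1 / (2*c)) ^ 2 + σ * p.1 ^ 2))) := by fun_prop
  have key : ∀ u v : ℝ, Real.exp (-(k * (v - u / (2*c)) ^ 2 + σ * u ^ 2))
      = Real.exp (-k * (v - u / (2*c)) ^ 2) * Real.exp (-(σ * u ^ 2)) := by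
    intro u v; rw [← Real.exp_add]; ring_nf
  rw [Measure.volume_eq_prod]
  refine (integrable_prod_iff hcont.aestronglyMeasurable).2 ⟨?_, ?_⟩
  · refine Eventually.of_forall fun u => ?_
    simp only [key]
    exact ((integrable_exp_neg_mul_sq hk).comp_sub_right (u/(2*c))).mul_const _
  · have heq : ∀ u : ℝ, (∫ v, ‖Real.exp (-(k * (v - u / (2*c)) ^ 2 + σ * u ^ 2))‖)
        = Real.sqrt (π/k) * Real.exp (-(σ * u ^ 2)) := by
      intro u
      simp only [Real.norm_eq_abs, key, abs_mul, Real.abs_exp]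
      rw [integral_mul_const, integral_sub_right_eq_self (fun v => Real.exp (-k * v^2)) (u/(2*c)),
        integral_gaussian, mul_comm]
    simp only [heq, ← neg_mul]
    exact (integrable_exp_neg_mul_sq hσ).const_mul _

lemma iterEqProd {c D k : ℝ} (hc : 0 < c) (hD : 0 < D) (hk : 0 < k) (u' v' : ℝ) :
    (∫ u in Iic u', ∫ v in Iic v',
        Real.exp (-(k * (v - u / (2*c)) ^ 2 + c / (2*D^2) * u ^ 2)))
      = ∫ p in Iic u' ×ˢ Iic v',
          Real.exp (-(k * (p.2 - p.1 / (2*c)) ^ 2 + c / (2*D^2) * p.1 ^ 2)) := by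
  have hint : Integrable
      (Function.uncurry fun u v : ℝ =>
        Real.exp (-(k * (v - u / (2*c)) ^ 2 + c / (2*D^2) * u ^ 2)))
      ((volume.restrict (Iic u')).prod (volume.restrict (Iic v'))) := by
    rw [Measure.prod_restrict, ← Measure.volume_eq_prod]
    exact (integrableG hc hD hk).restrict
  rw [MeasureTheory.integral_integral hint, Measure.prod_restrict, ← Measure.volume_eq_prod]

lemma contJ {c D k₀ : ℝ} (hc : 0 < c) (hD : 0 < D) (hk : 0 < k₀) (u' v' : ℝ) :
    ContinuousAt (fun k : ℝ => ∫ p in Iic u' ×ˢ Iic v',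
      Real.exp (-(k * (p.2 - p.1 / (2*c)) ^ 2 + c / (2*D^2) * p.1 ^ 2))) k₀ := by
  apply MeasureTheory.continuousAt_of_dominated
    (bound := fun p : ℝ × ℝ =>
      Real.exp (-(k₀/2 * (p.2 - p.1 / (2*c)) ^ 2 + c / (2*D^2) * p.1 ^ 2)))
  · refine Eventually.of_forall fun k => ?_
    exact (by fun_prop :
      Continuous fun p : ℝ × ℝ =>
        Real.exp (-(k * (p.2 - p.1 / (2*c)) ^ 2 + c / (2*D^2) * p.1 ^ 2))).aestronglyMeasurable
  · filter_upwards [Ioi_mem_nhds (show k₀/2 < k₀ by linarith)] with k hk'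
    refine Eventually.of_forall fun p => ?_
    rw [Real.norm_eq_abs, Real.abs_exp]
    refine Real.exp_le_exp.2 ?_
    have := sq_nonneg (p.2 - p.1 / (2*c))
    have hk2 : k₀/2 ≤ k := le_of_lt hk'
    nlinarith
  · exact (integrableG hc hD (by linarith)).restrict
  · refine Eventually.of_forall fun p => ?_
    exact (by fun_prop : Continuous fun k : ℝ =>
      Real.exp (-(k * (p.2 - p.1 / (2*c)) ^ 2 + c / (2*D^2) * p.1 ^ 2))).continuousAt

lemma cdf2_eq' (D c t₀ : ℝ) (hD : 0 < D) (hc : 0 < c) (u' v' : ℝ) {t : ℝ} (ht : t₀ < t) :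
    cdf2 D t₀ ((c * (t - t₀)) ^ ((1:ℝ)/2) * u') ((c * (t - t₀)) ^ ((3:ℝ)/2) * v') t
      = c^2 * (t - t₀) / (2 * π * D^2 * Real.sqrt (1 + (t - t₀)^2/12)) *
        ∫ u in Iic u', ∫ v in Iic v',
          Real.exp (-(c^3 * (t - t₀)^2 / (2 * D^2 * (1 + (t - t₀)^2/12)) * (v - u / (2*c)) ^ 2
            + c / (2*D^2) * u ^ 2)) := by
  set τ : ℝ := t - t₀ with hτdef
  have hτ : 0 < τ := by simp [hτdef]; linarith
  have hcτ : 0 < c * τ := by positivity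
  set a : ℝ := (c * τ) ^ ((1:ℝ)/2) with hadef
  set b : ℝ := (c * τ) ^ ((3:ℝ)/2) with hbdef
  have ha : 0 < a := rpow_pos_of_pos hcτ _
  have hb : 0 < b := rpow_pos_of_pos hcτ _
  have ha2 : a ^ 2 = c * τ := by
    rw [hadef, ← Real.rpow_natCast (((c*τ)) ^ ((1:ℝ)/2)) 2, ← Real.rpow_mul hcτ.le]
    norm_num
  have hb' : b = a * (c * τ) := by
    rw [hbdef, hadef, show (3:ℝ)/2 = 1/2 + 1 by norm_num, Real.rpow_add hcτ, Real.rpow_one]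
  have hD2 : (D:ℝ)^2 ≠ 0 := by positivity
  have h12 : (0:ℝ) < 1 + τ^2/12 := by positivity
  have hpt : ∀ u v : ℝ, shearDensity2 D t₀ (a * u) (b * v) t
      = 1 / (2 * π * D^2 * τ * Real.sqrt (1 + τ^2/12)) *
        Real.exp (-(c^3 * τ^2 / (2 * D^2 * (1 + τ^2/12)) * (v - u / (2*c)) ^ 2
          + c / (2*D^2) * u ^ 2)) := by
    intro u v
    rw [shearDensity2, ← hτdef]
    congr 2
    have e1 : (b * v - a * u * τ / 2) ^ 2 = (c * τ) * (c * τ * v - u * τ / 2) ^ 2 := by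
      rw [hb', show a * (c * τ) * v - a * u * τ / 2 = a * (c * τ * v - u * τ / 2) by ring,
        mul_pow, ha2]
    have e2 : (a * u) ^ 2 = (c * τ) * u ^ 2 := by rw [mul_pow, ha2]
    rw [e1, e2]
    field_simp
  rw [cdf2, integral_Iic_comp_mul_left' _ ha u']
  have inner : ∀ u : ℝ, (∫ y' in Iic (b * v'), shearDensity2 D t₀ (a * u) y' t)
      = b * ∫ v in Iic v', shearDensity2 D t₀ (a * u) (b * v) t := fun u =>
    integral_Iic_comp_mul_left' _ hb v'
  simp_rw [inner, hpt, integral_const_mul]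
  rw [← mul_assoc, ← mul_assoc]
  congr 1
  have hab : a * b = c * τ * (c * τ) := by rw [hb']; nlinarith [ha2]
  rw [mul_assoc a b, ← mul_assoc a b, hab]
  have hs : Real.sqrt (1 + τ^2/12) ≠ 0 := by positivity
  have hπ : π ≠ 0 := Real.pi_ne_zero
  field_simp

lemma cdf1_eq' (D c t₀ : ℝ) (hD : 0 < D) (hc : 0 < c) (u' v' : ℝ) {t : ℝ} (ht : t₀ < t) :
    cdf1 D t₀ ((c * (t - t₀)) ^ ((1:ℝ)/2) * u') ((c * (t - t₀)) ^ ((3:ℝ)/2) * v') t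
      = steadyShape D c u' v' := by
  set τ : ℝ := t - t₀ with hτdef
  have hτ : 0 < τ := by simp [hτdef]; linarith
  have hcτ : 0 < c * τ := by positivity
  set a : ℝ := (c * τ) ^ ((1:ℝ)/2) with hadef
  set b : ℝ := (c * τ) ^ ((3:ℝ)/2) with hbdef
  have ha : 0 < a := rpow_pos_of_pos hcτ _
  have hb : 0 < b := rpow_pos_of_pos hcτ _
  have ha2 : a ^ 2 = c * τ := by
    rw [hadef, ← Real.rpow_natCast (((c*τ)) ^ ((1:ℝ)/2)) 2, ← Real.rpow_mul hcτ.le]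
    norm_num
  have hb' : b = a * (c * τ) := by
    rw [hbdef, hadef, show (3:ℝ)/2 = 1/2 + 1 by norm_num, Real.rpow_add hcτ, Real.rpow_one]
  have hD2 : (D:ℝ)^2 ≠ 0 := by positivity
  have hpt : ∀ u v : ℝ, shearDensity1 D t₀ (a * u) (b * v) t
      = Real.sqrt 3 / (π * D^2 * τ^2) *
        Real.exp (-(6 * (v - u / (2*c)) ^ 2 * c ^ 3 / D ^ 2 + u ^ 2 * c / (2 * D ^ 2))) := by
    intro u v
    rw [shearDensity1, ← hτdef]
    congr 2
    have e1 : (b * v - a * u * τ / 2) ^ 2 = (c * τ) * (c * τ * v - u * τ / 2) ^ 2 := by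
      rw [hb', show a * (c * τ) * v - a * u * τ / 2 = a * (c * τ * v - u * τ / 2) by ring,
        mul_pow, ha2]
    have e2 : (a * u) ^ 2 = (c * τ) * u ^ 2 := by rw [mul_pow, ha2]
    rw [e1, e2]
    field_simp
  rw [cdf1, integral_Iic_comp_mul_left' _ ha u']
  have inner : ∀ u : ℝ, (∫ y' in Iic (b * v'), shearDensity1 D t₀ (a * u) y' t)
      = b * ∫ v in Iic v', shearDensity1 D t₀ (a * u) (b * v) t := fun u =>
    integral_Iic_comp_mul_left' _ hb v'
  simp_rw [inner, hpt, integral_const_mul]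
  rw [steadyShape, ← mul_assoc, ← mul_assoc]
  congr 1
  have hab : a * b = c * τ * (c * τ) := by rw [hb']; nlinarith [ha2]
  rw [mul_assoc a b, ← mul_assoc a b, hab]
  have hπ : π ≠ 0 := Real.pi_ne_zero
  field_simp

lemma tendsto_ratio' : Tendsto (fun τ : ℝ => τ^2 / (1 + τ^2/12)) atTop (𝓝 12) := by
  have h1 : Tendsto (fun τ : ℝ => 1 + τ^2/12) atTop atTop := by
    apply tendsto_atTop_add_const_left
    exact (tendsto_pow_atTop two_ne_zero).atTop_div_const (by norm_num)
  have h2 : Tendsto (fun τ : ℝ => 12 - 12 * (1 + τ^2/12)⁻¹) atTop (𝓝 (12 - 12 * 0)) :=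
    tendsto_const_nhds.sub (h1.inv_tendsto_atTop.const_mul 12)
  rw [show (12:ℝ) - 12 * 0 = 12 by norm_num] at h2
  refine h2.congr fun τ => ?_
  have h12 : (0:ℝ) < 1 + τ^2/12 := by positivity
  field_simp
  ring

lemma sqrt_twelve' : Real.sqrt 12 = 2 * Real.sqrt 3 := by
  rw [show (12:ℝ) = 2^2*3 by norm_num, Real.sqrt_mul (by positivity), Real.sqrt_sq (by norm_num)]

lemma tendsto_A' {c D : ℝ} (hD : 0 < D) :
    Tendsto (fun τ : ℝ => c^2 * τ / (2 * π * D^2 * Real.sqrt (1 + τ^2/12))) atTop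
      (𝓝 (Real.sqrt 3 * c^2 / (π * D^2))) := by
  have h := (tendsto_ratio'.sqrt).const_mul (c^2 / (2 * π * D^2))
  have hval : c^2 / (2 * π * D^2) * Real.sqrt 12 = Real.sqrt 3 * c^2 / (π * D^2) := by
    rw [sqrt_twelve']
    have hπ : π ≠ 0 := Real.pi_ne_zero
    field_simp
  rw [hval] at h
  refine h.congr' ?_
  filter_upwards [eventually_ge_atTop (0:ℝ)] with τ hτ
  have h12 : (0:ℝ) < 1 + τ^2/12 := by positivity
  rw [Real.sqrt_div (by positivity), Real.sqrt_sq hτ]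
  have hπ : π ≠ 0 := Real.pi_ne_zero
  have hs : Real.sqrt (1 + τ^2/12) ≠ 0 := by positivity
  field_simp

lemma tendsto_kf' {c D : ℝ} (hD : 0 < D) :
    Tendsto (fun τ : ℝ => c^3 * τ^2 / (2 * D^2 * (1 + τ^2/12))) atTop (𝓝 (6 * c^3 / D^2)) := by
  have h := tendsto_ratio'.const_mul (c^3 / (2 * D^2))
  have hval : c^3 / (2 * D^2) * 12 = 6 * c^3 / D^2 := by field_simp; ring
  rw [hval] at h
  refine h.congr fun τ => ?_
  have h12 : (0:ℝ) < 1 + τ^2/12 := by positivity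
  field_simp

/-- Under the rescaling `u = x/(c(t−t₀))^{1/2}`, `v = y/(c(t−t₀))^{3/2}`, the CDF of
the doubly-diffusive shear solution converges pointwise, as `t → ∞`, to the steady
self-similar shape, which coincides with the rescaled CDF of the purely x-diffusive
self-similar solution. -/
theorem rescaled_cdf_tendsto_steadyShape (D c t₀ : ℝ) (hD : 0 < D) (hc : 0 < c) :
    ∀ u' v' : ℝ,
      Tendsto
        (fun t : ℝ =>
          cdf2 D t₀ ((c * (t - t₀)) ^ ((1 : ℝ) / 2) * u')
            ((c * (t - t₀)) ^ ((3 : ℝ) / 2) * v') t)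
        atTop (nhds (steadyShape D c u' v')) ∧
      ∀ t : ℝ, t₀ < t →
        cdf1 D t₀ ((c * (t - t₀)) ^ ((1 : ℝ) / 2) * u')
            ((c * (t - t₀)) ^ ((3 : ℝ) / 2) * v') t
          = steadyShape D c u' v' := by
  intro u' v'
  have hkinf : (0:ℝ) < 6 * c^3 / D^2 := by positivity
  constructor
  · have hτt : Tendsto (fun t : ℝ => t - t₀) atTop atTop := by
      simpa [sub_eq_add_neg] using tendsto_atTop_add_const_right atTop (-t₀) tendsto_id
    have hJt := (contJ hc hD hkinf u' v').tendsto.comp ((tendsto_kf' (c := c) hD).comp hτt)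
    have hAt := (tendsto_A' (c := c) hD).comp hτt
    have hmul := hAt.mul hJt
    have hshape : Real.sqrt 3 * c^2 / (π * D^2) *
        (∫ p in Iic u' ×ˢ Iic v',
          Real.exp (-(6 * c^3 / D^2 * (p.2 - p.1 / (2*c)) ^ 2 + c / (2*D^2) * p.1 ^ 2)))
        = steadyShape D c u' v' := by
      rw [steadyShape, ← iterEqProd hc hD hkinf u' v']
      have harg : ∀ u v : ℝ,
          Real.exp (-(6 * c^3 / D^2 * (v - u / (2*c)) ^ 2 + c / (2*D^2) * u ^ 2))
          = Real.exp (-(6 * (v - u / (2 * c)) ^ 2 * c ^ 3 / D ^ 2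
              + u ^ 2 * c / (2 * D ^ 2))) := by
        intro u v; congr 1; ring
      simp_rw [harg]
    rw [← hshape]
    refine hmul.congr' ?_
    filter_upwards [eventually_gt_atTop t₀] with t ht
    have hτ : 0 < t - t₀ := by linarith
    have hkt : 0 < c^3 * (t - t₀)^2 / (2 * D^2 * (1 + (t - t₀)^2/12)) := by
      have h2 : 0 < (t - t₀)^2 := pow_pos hτ 2
      have h12 : (0:ℝ) < 1 + (t - t₀)^2/12 := by positivity
      positivity
    show c ^ 2 * (t - t₀) / (2 * π * D ^ 2 * Real.sqrt (1 + (t - t₀) ^ 2 / 12)) *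
        (∫ p in Iic u' ×ˢ Iic v',
          Real.exp (-(c^3 * (t - t₀)^2 / (2 * D^2 * (1 + (t - t₀)^2/12)) *
            (p.2 - p.1 / (2*c)) ^ 2 + c / (2*D^2) * p.1 ^ 2)))
      = cdf2 D t₀ ((c * (t - t₀)) ^ ((1 : ℝ) / 2) * u')
          ((c * (t - t₀)) ^ ((3 : ℝ) / 2) * v') t
    rw [cdf2_eq' D c t₀ hD hc u' v' ht, iterEqProd hc hD hkt u' v']
  · intro t ht
    exact cdf1_eq' D c t₀ hD hc u' v' ht
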